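/- For real numbers a, b > 0, the function φ ↦ aφ + b/φ on (0,∞) attains its unique minimum at φ = √(b/a), with minimum value 2√(ab). Consequently, for a symmetric positive definite Σ and orthonormal basis {u_i}, the symmetrized Stein loss tr(Σ̂Σ⁻¹ + Σ̂⁻¹Σ − 2I) over estimators Σ̂ = Σ_i φ_i u_iu_iᵀ with φ_i > 0 is minimized by φ_i = √((u_iᵀΣu_i)/(u_iᵀΣ⁻¹u_i)), with minimum value 2Σ_i √((u_iᵀΣ⁻¹u_i)(u_iᵀΣu_i)) − 2p. -/

import Mathlib

open Matrix

section Aux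

lemma scalar_min (a b : ℝ) (ha : 0 < a) (hb : 0 < b) :
    (∀ φ : ℝ, 0 < φ → 2 * Real.sqrt (a * b) ≤ a * φ + b / φ)
    ∧ a * Real.sqrt (b / a) + b / Real.sqrt (b / a) = 2 * Real.sqrt (a * b)
    ∧ (∀ φ : ℝ, 0 < φ → a * φ + b / φ = 2 * Real.sqrt (a * b) →
        φ = Real.sqrt (b / a)) := by
  have hba : 0 < b / a := div_pos hb ha
  set s := Real.sqrt (b / a) with hs
  have hs0 : 0 < s := Real.sqrt_pos.mpr hba
  have hs2 : s ^ 2 = b / a := Real.sq_sqrt hba.le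
  have has2 : a * s ^ 2 = b := by rw [hs2]; field_simp
  have hab : Real.sqrt (a * b) = a * s := by
    have h2 : (a * s) ^ 2 = a * b := by nlinarith [has2]
    rw [← h2, Real.sqrt_sq (by positivity : (0:ℝ) ≤ a * s)]
  have key : ∀ φ : ℝ, 0 < φ → a * φ + b / φ - 2 * Real.sqrt (a * b)
      = a / φ * (φ - s) ^ 2 := by
    intro φ hφ
    rw [hab]
    field_simp
    nlinarith [has2, mul_pos ha hφ]
  refine ⟨fun φ hφ => ?_, ?_, fun φ hφ heq => ?_⟩
  · nlinarith [key φ hφ, sq_nonneg (φ - s), div_pos ha hφ,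
      mul_nonneg (div_pos ha hφ).le (sq_nonneg (φ - s))]
  · have := key s hs0
    simp at this
    linarith
  · have h := key φ hφ
    rw [heq] at h
    have : (φ - s) ^ 2 = 0 := by
      have haφ : 0 < a / φ := div_pos ha hφ
      nlinarith [sq_nonneg (φ - s)]
    have := pow_eq_zero_iff (n := 2) (by norm_num) |>.mp this
    linarith

variable {p : ℕ} (u : Fin p → Fin p → ℝ)
  (hu : ∀ i j, u i ⬝ᵥ u j = if i = j then (1 : ℝ) else 0)

lemma hM (ψ : Fin p → ℝ) :
    (∑ i, ψ i • vecMulVec (u i) (u i))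
      = (Matrix.of u)ᵀ * Matrix.diagonal ψ * Matrix.of u := by
  ext a b
  simp [Matrix.sum_apply, Matrix.mul_apply, Matrix.diagonal, vecMulVec_apply,
    Finset.sum_mul, mul_comm, mul_assoc, mul_left_comm]

include hu in
lemma hUUt : Matrix.of u * (Matrix.of u)ᵀ = 1 := by
  ext i j
  simpa [Matrix.mul_apply, dotProduct, Matrix.one_apply] using hu i j

include hu in
lemma hMinv (ψ : Fin p → ℝ) (hψ : ∀ i, ψ i ≠ 0) :
    (∑ i, ψ i • vecMulVec (u i) (u i))⁻¹
      = ∑ i, (ψ i)⁻¹ • vecMulVec (u i) (u i) := by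
  apply Matrix.inv_eq_right_inv
  rw [hM, hM]
  have h1 := hUUt u hu
  have h2 : (Matrix.of u)ᵀ * Matrix.of u = 1 := mul_eq_one_comm.mp h1
  calc (Matrix.of u)ᵀ * Matrix.diagonal ψ * Matrix.of u *
        ((Matrix.of u)ᵀ * Matrix.diagonal (fun i => (ψ i)⁻¹) * Matrix.of u)
      = (Matrix.of u)ᵀ * Matrix.diagonal ψ * (Matrix.of u * (Matrix.of u)ᵀ) *
          Matrix.diagonal (fun i => (ψ i)⁻¹) * Matrix.of u := by
        simp only [Matrix.mul_assoc]
    _ = (Matrix.of u)ᵀ * (Matrix.diagonal ψ * Matrix.diagonal (fun i => (ψ i)⁻¹)) * Matrix.of u := by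
        rw [h1]; simp only [Matrix.mul_one, Matrix.mul_assoc]
    _ = 1 := by
        rw [Matrix.diagonal_mul_diagonal]
        have : (fun i => ψ i * (ψ i)⁻¹) = fun _ => (1:ℝ) := by
          funext i; exact mul_inv_cancel₀ (hψ i)
        rw [this, Matrix.diagonal_one, Matrix.mul_one, h2]

lemma htr (ψ : Fin p → ℝ) (A : Matrix (Fin p) (Fin p) ℝ) :
    Matrix.trace ((∑ i, ψ i • vecMulVec (u i) (u i)) * A)
      = ∑ i, ψ i * (u i ⬝ᵥ A *ᵥ u i) := by
  rw [Finset.sum_mul, Matrix.trace_sum]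
  refine Finset.sum_congr rfl fun i _ => ?_
  rw [Matrix.smul_mul, Matrix.trace_smul]
  congr 1
  simp only [Matrix.trace, Matrix.diag, Matrix.mul_apply, vecMulVec_apply,
    dotProduct, Matrix.mulVec, smul_eq_mul]
  rw [Finset.sum_comm]
  exact Finset.sum_congr rfl fun k _ => by
    rw [Finset.mul_sum]; exact Finset.sum_congr rfl fun a _ => by ring

end Aux

/-- (a) For `a, b > 0` the function `φ ↦ aφ + b/φ` on `(0,∞)` attains its unique
minimum at `φ = √(b/a)` with value `2√(ab)`.  (b) Consequently, the symmetrized Stein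
loss `tr(Σ̂Σ⁻¹ + Σ̂⁻¹Σ - 2I)` over invariant estimators `Σ̂ = ∑ ψᵢ uᵢuᵢᵀ` with `ψᵢ > 0`
is minimized by `ψᵢ = √((uᵢᵀΣuᵢ)/(uᵢᵀΣ⁻¹uᵢ))`, with minimum value
`2 ∑ √((uᵢᵀΣ⁻¹uᵢ)(uᵢᵀΣuᵢ)) - 2p`. -/
theorem statement7 (p : ℕ) (S : Matrix (Fin p) (Fin p) ℝ) (hS : S.PosDef)
    (u : Fin p → Fin p → ℝ)
    (hu : ∀ i j, u i ⬝ᵥ u j = if i = j then (1 : ℝ) else 0)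
    (loss : (Fin p → ℝ) → ℝ)
    (hloss : ∀ ψ, loss ψ =
      Matrix.trace ((∑ i, ψ i • vecMulVec (u i) (u i)) * S⁻¹
        + (∑ i, ψ i • vecMulVec (u i) (u i))⁻¹ * S
        - (2 : ℝ) • (1 : Matrix (Fin p) (Fin p) ℝ)))
    (φopt : Fin p → ℝ)
    (hφopt : ∀ i, φopt i = Real.sqrt ((u i ⬝ᵥ S *ᵥ u i) / (u i ⬝ᵥ S⁻¹ *ᵥ u i))) :
    -- (a) the scalar minimization
    (∀ a b : ℝ, 0 < a → 0 < b →
      (∀ φ : ℝ, 0 < φ → 2 * Real.sqrt (a * b) ≤ a * φ + b / φ)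
      ∧ a * Real.sqrt (b / a) + b / Real.sqrt (b / a) = 2 * Real.sqrt (a * b)
      ∧ (∀ φ : ℝ, 0 < φ → a * φ + b / φ = 2 * Real.sqrt (a * b) →
          φ = Real.sqrt (b / a)))
    -- (b) the matrix consequence
    ∧ (∀ ψ : Fin p → ℝ, (∀ i, 0 < ψ i) → loss φopt ≤ loss ψ)
    ∧ loss φopt
        = 2 * (∑ i, Real.sqrt ((u i ⬝ᵥ S⁻¹ *ᵥ u i) * (u i ⬝ᵥ S *ᵥ u i))) - 2 * p := by
  -- nonzero basis vectors
  have hune : ∀ i, u i ≠ 0 := by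
    intro i h
    have := hu i i
    simp [h] at this
  -- positivity of the quadratic forms
  have ha : ∀ i, 0 < u i ⬝ᵥ S⁻¹ *ᵥ u i := fun i => by simpa using hS.inv.dotProduct_mulVec_pos (hune i)
  have hb : ∀ i, 0 < u i ⬝ᵥ S *ᵥ u i := fun i => by simpa using hS.dotProduct_mulVec_pos (hune i)
  set a : Fin p → ℝ := fun i => u i ⬝ᵥ S⁻¹ *ᵥ u i with ha_def
  set b : Fin p → ℝ := fun i => u i ⬝ᵥ S *ᵥ u i with hb_def
  have hφpos : ∀ i, 0 < φopt i := by
    intro i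
    rw [hφopt i]
    exact Real.sqrt_pos.mpr (div_pos (hb i) (ha i))
  -- loss formula for positive ψ
  have hlossform : ∀ ψ : Fin p → ℝ, (∀ i, 0 < ψ i) →
      loss ψ = ∑ i, (a i * ψ i + b i / ψ i) - 2 * p := by
    intro ψ hψ
    rw [hloss ψ, Matrix.trace_sub, Matrix.trace_add,
      hMinv u hu ψ (fun i => (hψ i).ne'), htr, htr,
      Matrix.trace_smul, Matrix.trace_one]
    have h2p : (2:ℝ) • (Fintype.card (Fin p) : ℝ) = 2 * p := by
      simp [Fintype.card_fin]
    rw [h2p, ← Finset.sum_add_distrib]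
    congr 1
    refine Finset.sum_congr rfl fun i _ => ?_
    have : (ψ i)⁻¹ * (u i ⬝ᵥ S *ᵥ u i) = b i / ψ i := by
      rw [hb_def]; field_simp
    rw [this]
    ring
  -- value at the optimum
  have hval : loss φopt = 2 * (∑ i, Real.sqrt (a i * b i)) - 2 * p := by
    rw [hlossform φopt hφpos]
    rw [Finset.mul_sum]
    congr 1
    refine Finset.sum_congr rfl fun i _ => ?_
    have := (scalar_min (a i) (b i) (ha i) (hb i)).2.1
    rw [hφopt i]
    exact this
  refine ⟨fun a b ha hb => scalar_min a b ha hb, fun ψ hψ => ?_, hval⟩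
  rw [hval, hlossform ψ hψ]
  have : 2 * (∑ i, Real.sqrt (a i * b i)) ≤ ∑ i, (a i * ψ i + b i / ψ i) := by
    rw [Finset.mul_sum]
    exact Finset.sum_le_sum fun i _ =>
      (scalar_min (a i) (b i) (ha i) (hb i)).1 (ψ i) (hψ i)
  linarith
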